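/- arXiv:1310.5371 — 2 statements merged into one kernel-verified Lean document; each statement's English description precedes it below -/
import Mathlib

section
/- There exists a constant c > 0, depending only on d, K₀, κ, α and ℓ, such that ψ(ξ) ≤ c L(|ξ|⁻¹) for all ξ ∈ ℝ^d with |ξ| ≥ 5. -/
open MeasureTheory Metric Set Filter
open scoped ENNReal Topology RealInnerProductSpace

noncomputable section

/-- `L(r) = ∫_r^1 ℓ(s)/s ds`. -/
def Lfun (ℓ : ℝ → ℝ) (r : ℝ) : ℝ := ∫ s in r..1, ℓ s / s

/-- `ℓ` varies regularly at `0+` with index `ρ`. -/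
def RegVaryAt0 (ℓ : ℝ → ℝ) (ρ : ℝ) : Prop :=
  ∀ lam : ℝ, 0 < lam →
    Filter.Tendsto (fun r => ℓ (lam * r) / ℓ r) (𝓝[>] (0 : ℝ)) (𝓝 (lam ^ ρ))

/-- `ℓ` is bounded away from `0` and `∞` on compact subsets of `(0,1)`. -/
def LocBddAway (ℓ : ℝ → ℝ) : Prop :=
  ∀ a b : ℝ, 0 < a → a ≤ b → b < 1 →
    ∃ m M : ℝ, 0 < m ∧ ∀ s : ℝ, a ≤ s → s ≤ b → m ≤ ℓ s ∧ ℓ s ≤ M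

/-- conditions on the (translation invariant) kernel `k`: measurability, nonnegativity,
symmetry, `∫ (1 ∧ |h|²) k(h) dh ≤ K₀` and `κ⁻¹ ℓ(|h|)|h|^{-d} ≤ k(h) ≤ κ ℓ(|h|)|h|^{-d}`
for `0 < |h| ≤ 1`. -/
def KernelCondsTI (d : ℕ) (K₀ κ : ℝ) (ℓ : ℝ → ℝ)
    (k : EuclideanSpace ℝ (Fin d) → ℝ) : Prop :=
  Measurable k ∧ (∀ h, 0 ≤ k h) ∧ (∀ h, k h = k (-h)) ∧
  ((∫⁻ h in ({0}ᶜ : Set (EuclideanSpace ℝ (Fin d))),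
      ENNReal.ofReal (min 1 (‖h‖ ^ 2) * k h)) ≤ ENNReal.ofReal K₀) ∧
  (∀ h : EuclideanSpace ℝ (Fin d), 0 < ‖h‖ → ‖h‖ ≤ 1 →
    κ⁻¹ * (ℓ ‖h‖ / ‖h‖ ^ d) ≤ k h ∧ k h ≤ κ * (ℓ ‖h‖ / ‖h‖ ^ d))

/-- the characteristic exponent `ψ(ξ) = ∫ (1 - cos⟨ξ,h⟩) k(h) dh`. -/
def psiFun (d : ℕ) (k : EuclideanSpace ℝ (Fin d) → ℝ)
    (ξ : EuclideanSpace ℝ (Fin d)) : ℝ :=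
  ∫ h in ({0}ᶜ : Set (EuclideanSpace ℝ (Fin d))), (1 - Real.cos ⟪ξ, h⟫) * k h

-- ===== auxiliary developments =====
section AuxPart1

open MeasureTheory Metric Set Filter Real
open scoped ENNReal Topology

noncomputable section

def RegVaryAt0' (ℓ : ℝ → ℝ) (ρ : ℝ) : Prop :=
  ∀ lam : ℝ, 0 < lam →
    Filter.Tendsto (fun r => ℓ (lam * r) / ℓ r) (𝓝[>] (0 : ℝ)) (𝓝 (lam ^ ρ))

/-- additive-form limit -/
lemma g_limit (α : ℝ) (ℓ : ℝ → ℝ)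
    (hℓpos : ∀ s : ℝ, 0 < s → s < 1 → 0 < ℓ s) (hℓreg : RegVaryAt0' ℓ (-α)) (u : ℝ)
    (hu : 0 ≤ u) :
    Tendsto (fun x : ℝ => Real.log (ℓ (Real.exp (-(x + u)))) - Real.log (ℓ (Real.exp (-x))))
      atTop (𝓝 (α * u)) := by
  have hlam : (0:ℝ) < Real.exp (-u) := Real.exp_pos _
  have h1 : Tendsto (fun x : ℝ => Real.exp (-x)) atTop (𝓝[>] (0:ℝ)) :=
    Real.tendsto_exp_atBot_nhdsGT.comp tendsto_neg_atTop_atBot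
  have h2 := (hℓreg _ hlam).comp h1
  have hpos : (0:ℝ) < Real.exp (-u) ^ (-α) := Real.rpow_pos_of_pos hlam _
  have h3 : Tendsto (fun x : ℝ =>
      Real.log (ℓ (Real.exp (-u) * Real.exp (-x)) / ℓ (Real.exp (-x)))) atTop
      (𝓝 (Real.log (Real.exp (-u) ^ (-α)))) :=
    (Real.continuousAt_log hpos.ne').tendsto.comp h2
  have hlog : Real.log (Real.exp (-u) ^ (-α)) = α * u := by
    rw [Real.log_rpow hlam, Real.log_exp]; ring
  rw [hlog] at h3
  refine h3.congr' ?_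
  filter_upwards [eventually_gt_atTop (0:ℝ)] with x hx
  have he1 : (0:ℝ) < Real.exp (-x) := Real.exp_pos _
  have he2 : Real.exp (-x) < 1 := Real.exp_lt_one_iff.mpr (by linarith)
  have hp1 : 0 < ℓ (Real.exp (-x)) := hℓpos _ he1 he2
  have hmul : Real.exp (-u) * Real.exp (-x) = Real.exp (-(x+u)) := by
    rw [← Real.exp_add]; ring_nf
  have he3 : Real.exp (-(x+u)) < 1 := Real.exp_lt_one_iff.mpr (by linarith)
  have hp2 : 0 < ℓ (Real.exp (-(x+u))) := hℓpos _ (Real.exp_pos _) he3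
  rw [hmul, Real.log_div hp2.ne' hp1.ne']

lemma uct (α : ℝ) (hα₀ : 0 ≤ α) (ℓ : ℝ → ℝ) (hℓmeas : Measurable ℓ)
    (hℓpos : ∀ s : ℝ, 0 < s → s < 1 → 0 < ℓ s) (hℓreg : RegVaryAt0' ℓ (-α))
    (ε : ℝ) (hε : 0 < ε) :
    ∃ t₀ : ℝ, 0 < t₀ ∧ t₀ ≤ 1/5 ∧ ∀ t : ℝ, 0 < t → t ≤ t₀ → ∀ lam : ℝ, 1/2 ≤ lam → lam ≤ 1 →
      ℓ (lam * t) ≤ Real.exp (α * Real.log 2 + ε) * ℓ t := by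
  by_contra hcon
  push_neg at hcon
  have h6 : ∀ n : ℕ, (0:ℝ) < 1/(n+6) ∧ (1:ℝ)/(n+6) ≤ 1/5 := by
    intro n
    constructor
    · positivity
    · rw [div_le_div_iff₀ (by positivity) (by norm_num)]
      have : (0:ℝ) ≤ (n:ℝ) := Nat.cast_nonneg n
      linarith
  choose t ht0 ht1 lam hlam1 hlam2 hgt using fun n : ℕ => hcon (1/(n+6:ℝ)) (h6 n).1 (h6 n).2
  set g : ℝ → ℝ := fun x => Real.log (ℓ (Real.exp (-x))) with hg_def
  have hgmeas : Measurable g :=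
    Real.measurable_log.comp (hℓmeas.comp (Real.measurable_exp.comp measurable_neg))
  set x : ℕ → ℝ := fun n => -Real.log (t n) with hx_def
  set u : ℕ → ℝ := fun n => -Real.log (lam n) with hu_def
  have hl2 : (0:ℝ) < Real.log 2 := Real.log_pos (by norm_num)
  have htlt : ∀ n, t n < 1 := fun n => lt_of_le_of_lt (ht1 n) (lt_of_le_of_lt (h6 n).2 (by norm_num))
  have hu0 : ∀ n, 0 ≤ u n := by
    intro n
    simp only [hu_def, neg_nonneg]
    exact Real.log_nonpos (by linarith [hlam1 n]) (hlam2 n)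
  have hul2 : ∀ n, u n ≤ Real.log 2 := by
    intro n
    have : Real.log (1/2) ≤ Real.log (lam n) :=
      Real.log_le_log (by norm_num) (hlam1 n)
    rw [Real.log_div one_ne_zero (by norm_num), Real.log_one] at this
    simp only [hu_def]
    linarith
  have hexp_x : ∀ n, Real.exp (-(x n)) = t n := by
    intro n; simp only [hx_def, neg_neg]; exact Real.exp_log (ht0 n)
  have hexp_xu : ∀ n, Real.exp (-(x n + u n)) = lam n * t n := by
    intro n
    have : -(x n + u n) = Real.log (lam n) + Real.log (t n) := by
      simp only [hx_def, hu_def]; ring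
    rw [this, Real.exp_add, Real.exp_log (by linarith [hlam1 n]), Real.exp_log (ht0 n)]
  -- x n → ∞
  have hxtop : Tendsto x atTop atTop := by
    have hmono : ∀ n : ℕ, Real.log ((n:ℝ)+6) ≤ x n := by
      intro n
      have h1 : Real.log (t n) ≤ Real.log (1/((n:ℝ)+6)) :=
        Real.log_le_log (ht0 n) (ht1 n)
      rw [Real.log_div one_ne_zero (by positivity), Real.log_one] at h1
      simp only [hx_def]; linarith
    refine tendsto_atTop_mono hmono ?_
    exact Real.tendsto_log_atTop.comp
      (tendsto_atTop_add_const_right _ 6 tendsto_natCast_atTop_atTop)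
  -- failure of the inequality along the sequence
  have hfail : ∀ n, α * u n + ε < g (x n + u n) - g (x n) := by
    intro n
    have hlt : t n * lam n < 1 := by
      nlinarith [ht0 n, htlt n, hlam2 n, hlam1 n]
    have hpt : 0 < ℓ (t n) := hℓpos _ (ht0 n) (htlt n)
    have hplt : 0 < ℓ (lam n * t n) := by
      refine hℓpos _ (by nlinarith [ht0 n, hlam1 n]) (by nlinarith)
    have h1 : Real.log (Real.exp (α * Real.log 2 + ε) * ℓ (t n)) < Real.log (ℓ (lam n * t n)) :=
      Real.log_lt_log (by positivity) (hgt n)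
    rw [Real.log_mul (Real.exp_ne_zero _) hpt.ne', Real.log_exp] at h1
    have hgxu : g (x n + u n) = Real.log (ℓ (lam n * t n)) := by
      rw [hg_def]; simp only; rw [hexp_xu n]
    have hgx : g (x n) = Real.log (ℓ (t n)) := by
      rw [hg_def]; simp only; rw [hexp_x n]
    rw [hgxu, hgx]
    have : α * u n ≤ α * Real.log 2 := mul_le_mul_of_nonneg_left (hul2 n) hα₀
    linarith
  -- the sets V and W
  set l2 := Real.log 2 with hl2def
  set I : Set ℝ := Icc 0 (2*l2) with hI_def
  set V : ℕ → Set ℝ := fun n =>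
    I ∩ ⋂ (m : ℕ) (_ : n ≤ m), {v | |g (x m + v) - g (x m) - α*v| ≤ ε/3} with hV_def
  set W : ℕ → Set ℝ := fun n =>
    I ∩ ⋂ (m : ℕ) (_ : n ≤ m), {w | |g (x m + u m + w) - g (x m + u m) - α*w| ≤ ε/3} with hW_def
  have habs_meas : ∀ (c : ℝ) (b : ℕ → ℝ), MeasurableSet {v : ℝ | |g (b 0 + v) - c - α*v| ≤ ε/3} := by
    intro c b
    have hm : Measurable fun v : ℝ => |g (b 0 + v) - c - α*v| :=
      ((hgmeas.comp (measurable_const.add measurable_id)).sub measurable_const).sub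
        (measurable_const.mul measurable_id) |>.abs
    exact hm measurableSet_Iic
  have hVmeas : ∀ n, MeasurableSet (V n) := by
    intro n
    refine measurableSet_Icc.inter (MeasurableSet.iInter fun m => MeasurableSet.iInter fun _ => ?_)
    exact habs_meas (g (x m)) (fun _ => x m)
  have hWmeas : ∀ n, MeasurableSet (W n) := by
    intro n
    refine measurableSet_Icc.inter (MeasurableSet.iInter fun m => MeasurableSet.iInter fun _ => ?_)
    exact habs_meas (g (x m + u m)) (fun _ => x m + u m)
  have hVmono : Monotone V := by
    intro a b hab v hv
    obtain ⟨h1, h2⟩ := hv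
    simp only [mem_iInter, mem_setOf_eq] at h2
    refine ⟨h1, ?_⟩
    simp only [mem_iInter, mem_setOf_eq]
    exact fun m hm => h2 m (le_trans hab hm)
  have hWmono : Monotone W := by
    intro a b hab v hv
    obtain ⟨h1, h2⟩ := hv
    simp only [mem_iInter, mem_setOf_eq] at h2
    refine ⟨h1, ?_⟩
    simp only [mem_iInter, mem_setOf_eq]
    exact fun m hm => h2 m (le_trans hab hm)
  -- unions cover I
  have hVunion : ⋃ n, V n = I := by
    apply Subset.antisymm
    · exact iUnion_subset fun n => inter_subset_left
    · intro v hv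
      have hv0 : 0 ≤ v := hv.1
      have hlim := (g_limit α ℓ hℓpos hℓreg v hv0).comp hxtop
      obtain ⟨N, hN⟩ := Metric.tendsto_atTop.mp hlim (ε/3) (by linarith)
      refine mem_iUnion.mpr ⟨N, hv, ?_⟩
      simp only [mem_iInter, mem_setOf_eq]
      intro m hm
      have := hN m hm
      rw [Real.dist_eq] at this
      simp only [Function.comp_apply] at this
      exact le_of_lt this
  have hWunion : ⋃ n, W n = I := by
    apply Subset.antisymm
    · exact iUnion_subset fun n => inter_subset_left
    · intro w hw
      have hw0 : 0 ≤ w := hw.1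
      have hxutop : Tendsto (fun n => x n + u n) atTop atTop :=
        tendsto_atTop_mono (fun n => le_add_of_nonneg_right (hu0 n)) hxtop
      have hlim := (g_limit α ℓ hℓpos hℓreg w hw0).comp hxutop
      obtain ⟨N, hN⟩ := Metric.tendsto_atTop.mp hlim (ε/3) (by linarith)
      refine mem_iUnion.mpr ⟨N, hw, ?_⟩
      simp only [mem_iInter, mem_setOf_eq]
      intro m hm
      have := hN m hm
      rw [Real.dist_eq] at this
      simp only [Function.comp_apply] at this
      exact le_of_lt this
  -- find big indices
  have hμI : volume I = ENNReal.ofReal (2*l2) := by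
    rw [hI_def, Real.volume_Icc, sub_zero]
  have hbig : ∀ (S : ℕ → Set ℝ), Monotone S → (⋃ n, S n) = I →
      ∃ N, ENNReal.ofReal ((3/2)*l2) < volume (S N) := by
    intro S hmono huni
    have : volume (⋃ n, S n) = ⨆ n, volume (S n) :=
      Directed.measure_iUnion (hmono.directed_le)
    rw [huni, hμI] at this
    have hlt : ENNReal.ofReal ((3/2)*l2) < ⨆ n, volume (S n) := by
      rw [← this]
      exact ENNReal.ofReal_lt_ofReal_iff_of_nonneg (by positivity) |>.mpr (by linarith)
    exact lt_iSup_iff.mp hlt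
  obtain ⟨N₁, hN₁⟩ := hbig V hVmono hVunion
  obtain ⟨N₂, hN₂⟩ := hbig W hWmono hWunion
  set m := max N₁ N₂ with hm_def
  have hVm : ENNReal.ofReal ((3/2)*l2) < volume (V m) :=
    lt_of_lt_of_le hN₁ (measure_mono (hVmono (le_max_left _ _)))
  have hWm : ENNReal.ofReal ((3/2)*l2) < volume (W m) :=
    lt_of_lt_of_le hN₂ (measure_mono (hWmono (le_max_right _ _)))
  -- translate W
  set B : Set ℝ := (fun v => v + (-(u m))) ⁻¹' (W m) with hB_def
  have hμB : volume B = volume (W m) := measure_preimage_add_right volume (-(u m)) (W m)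
  have hBmeas : MeasurableSet B := (hWmeas m).preimage (measurable_add_const _)
  -- A ∪ B ⊆ [0, 3 l2]
  have hsub : V m ∪ B ⊆ Icc 0 (3*l2) := by
    intro v hv
    rcases hv with hv | hv
    · exact ⟨hv.1.1, by linarith [hv.1.2, hl2]⟩
    · have h1 : v + (-(u m)) ∈ I := hv.1
      constructor
      · linarith [h1.1, hu0 m]
      · linarith [h1.2, hul2 m]
  have hμunion : volume (V m ∪ B) ≤ ENNReal.ofReal (3*l2) := by
    calc volume (V m ∪ B) ≤ volume (Icc 0 (3*l2)) := measure_mono hsub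
    _ = ENNReal.ofReal (3*l2) := by rw [Real.volume_Icc, sub_zero]
  have hinter : (V m ∩ B).Nonempty := by
    by_contra hne
    rw [not_nonempty_iff_eq_empty] at hne
    have h1 : volume (V m ∪ B) + volume (V m ∩ B) = volume (V m) + volume B :=
      measure_union_add_inter _ hBmeas
    rw [hne, measure_empty, add_zero, hμB] at h1
    have h2 : ENNReal.ofReal (3*l2) < volume (V m) + volume (W m) := by
      calc ENNReal.ofReal (3*l2) = ENNReal.ofReal ((3/2)*l2) + ENNReal.ofReal ((3/2)*l2) := by
            rw [← ENNReal.ofReal_add (by positivity) (by positivity)]; ring_nf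
      _ < volume (V m) + volume (W m) := ENNReal.add_lt_add hVm hWm
    rw [← h1] at h2
    exact absurd h2 (not_lt.mpr hμunion)
  obtain ⟨v, hvV, hvB⟩ := hinter
  -- derive the contradiction
  have hA : |g (x m + v) - g (x m) - α*v| ≤ ε/3 := by
    have := hvV.2
    simp only [mem_iInter, mem_setOf_eq] at this
    exact this m le_rfl
  have hBmem : |g (x m + u m + (v - u m)) - g (x m + u m) - α*(v - u m)| ≤ ε/3 := by
    have h1 : v + (-(u m)) ∈ W m := hvB
    have := h1.2
    simp only [mem_iInter, mem_setOf_eq] at this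
    have h2 := this m le_rfl
    rw [show v + (-(u m)) = v - u m by ring] at h2
    exact h2
  rw [show x m + u m + (v - u m) = x m + v by ring] at hBmem
  have hcontra := hfail m
  rw [abs_le] at hA hBmem
  have hfin : g (x m + u m) - g (x m) - α * u m ≤ 2*ε/3 := by
    linarith [hA.1, hA.2, hBmem.1, hBmem.2]
  have h10 : ε < g (x m + u m) - g (x m) - α * u m := by linarith only [hcontra]
  have h11 : ε < 2*ε/3 := lt_of_lt_of_le h10 hfin
  linarith only [h11, hε]

lemma karamata_blocks (ℓ : ℝ → ℝ)
    (hℓpos : ∀ s : ℝ, 0 < s → s < 1 → 0 < ℓ s)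
    (t₀ C : ℝ) (ht₀0 : 0 < t₀) (ht₀5 : t₀ ≤ 1/5) (hC1 : 1 ≤ C) (hC4 : C < 4)
    (hC : ∀ t : ℝ, 0 < t → t ≤ t₀ → ∀ lam : ℝ, 1/2 ≤ lam → lam ≤ 1 → ℓ (lam * t) ≤ C * ℓ t)
    (r : ℝ) (hr0 : 0 < r) (hrt : r ≤ t₀) :
    ∫⁻ s in Ioc 0 r, ENNReal.ofReal (s * ℓ s)
      ≤ ENNReal.ofReal (r^2 * ℓ r * (2*C/(4-C))) := by
  have hC0 : (0:ℝ) < C := by linarith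
  have hr1 : r < 1 := by linarith
  have hℓr : 0 < ℓ r := hℓpos r hr0 hr1
  -- iterated bound
  have hpow : ∀ j : ℕ, ℓ (r/2^j) ≤ C^j * ℓ r := by
    intro j
    induction j with
    | zero => simp
    | succ j ih =>
      have hb0 : (0:ℝ) < r/2^j := by positivity
      have hbt : r/2^j ≤ t₀ := le_trans (div_le_self hr0.le (one_le_pow₀ (by norm_num))) hrt
      have h1 : ℓ ((1/2) * (r/2^j)) ≤ C * ℓ (r/2^j) :=
        hC _ hb0 hbt (1/2) le_rfl (by norm_num)
      have h2 : (1/2 : ℝ) * (r/2^j) = r/2^(j+1) := by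
        rw [pow_succ]; ring
      rw [h2] at h1
      calc ℓ (r/2^(j+1)) ≤ C * ℓ (r/2^j) := h1
      _ ≤ C * (C^j * ℓ r) := by
          exact mul_le_mul_of_nonneg_left ih hC0.le
      _ = C^(j+1) * ℓ r := by ring
  have hblock : ∀ j : ℕ, ∀ s ∈ Ioc (r/2^(j+1)) (r/2^j), ℓ s ≤ C^(j+1) * ℓ r := by
    intro j s hs
    have hb0 : (0:ℝ) < r/2^j := by positivity
    have hbt : r/2^j ≤ t₀ := le_trans (div_le_self hr0.le (one_le_pow₀ (by norm_num))) hrt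
    set lam := s / (r/2^j) with hlam_def
    have hs0 : 0 < s := lt_trans (by positivity) hs.1
    have hlam_ub : lam ≤ 1 := by
      rw [hlam_def, div_le_one hb0]; exact hs.2
    have hlam_lb : 1/2 ≤ lam := by
      rw [hlam_def, le_div_iff₀ hb0]
      have := hs.1
      rw [pow_succ] at this
      calc 1/2 * (r/2^j) = r / 2^j / 2 := by ring
      _ = r / (2^j * 2) := by rw [div_div]
      _ ≤ s := this.le
    have heq : lam * (r/2^j) = s := div_mul_cancel₀ s hb0.ne'
    calc ℓ s = ℓ (lam * (r/2^j)) := by rw [heq]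
    _ ≤ C * ℓ (r/2^j) := hC _ hb0 hbt lam hlam_lb hlam_ub
    _ ≤ C * (C^j * ℓ r) := mul_le_mul_of_nonneg_left (hpow j) hC0.le
    _ = C^(j+1) * ℓ r := by ring
  -- covering
  have hsub : Ioc 0 r ⊆ ⋃ j : ℕ, Ioc (r/2^(j+1)) (r/2^j) := by
    intro s hs
    have hs0 : 0 < s := hs.1
    have hsr : s ≤ r := hs.2
    have hex : ∃ j : ℕ, r/2^(j+1) < s := by
      obtain ⟨j, hj⟩ := pow_unbounded_of_one_lt (r/s) (one_lt_two (α := ℝ))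
      refine ⟨j, ?_⟩
      rw [div_lt_iff₀ (by positivity)]
      rw [div_lt_iff₀ hs0] at hj
      calc r < 2^j * s := hj
      _ ≤ 2^(j+1) * s := by
          have : (2:ℝ)^j ≤ 2^(j+1) := pow_le_pow_right₀ (by norm_num) (Nat.le_succ j)
          nlinarith
      _ = s * 2^(j+1) := by ring
    classical
    set j₀ := Nat.find hex with hj₀_def
    have hj₀ : r/2^(j₀+1) < s := Nat.find_spec hex
    have hle : s ≤ r/2^j₀ := by
      rcases Nat.eq_zero_or_pos j₀ with h0 | hpos
      · rw [h0]; simpa using hsr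
      · have hmin : ¬ (r/2^((j₀-1)+1) < s) := Nat.find_min hex (by omega)
        push_neg at hmin
        have : j₀ - 1 + 1 = j₀ := by omega
        rw [this] at hmin
        exact hmin
    exact mem_iUnion.mpr ⟨j₀, hj₀, hle⟩
  calc ∫⁻ s in Ioc 0 r, ENNReal.ofReal (s * ℓ s)
      ≤ ∫⁻ s in ⋃ j : ℕ, Ioc (r/2^(j+1)) (r/2^j), ENNReal.ofReal (s * ℓ s) :=
        lintegral_mono_set hsub
    _ ≤ ∑' j : ℕ, ∫⁻ s in Ioc (r/2^(j+1)) (r/2^j), ENNReal.ofReal (s * ℓ s) :=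
        lintegral_iUnion_le _ _
    _ ≤ ∑' j : ℕ, ENNReal.ofReal (r^2 * ℓ r * (C/2)) * ENNReal.ofReal (C/4) ^ j := by
        refine ENNReal.tsum_le_tsum fun j => ?_
        have hb0 : (0:ℝ) < r/2^j := by positivity
        calc ∫⁻ s in Ioc (r/2^(j+1)) (r/2^j), ENNReal.ofReal (s * ℓ s)
            ≤ ∫⁻ _ in Ioc (r/2^(j+1)) (r/2^j),
                ENNReal.ofReal ((r/2^j) * (C^(j+1) * ℓ r)) := by
              refine setLIntegral_mono measurable_const fun s hs => ?_
              refine ENNReal.ofReal_le_ofReal ?_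
              have hs0 : 0 < s := lt_trans (by positivity) hs.1
              have hs1 : s < 1 := lt_of_le_of_lt hs.2
                (lt_of_le_of_lt (div_le_self hr0.le (one_le_pow₀ (by norm_num))) hr1)
              have hℓs : 0 ≤ ℓ s := (hℓpos s hs0 hs1).le
              exact mul_le_mul hs.2 (hblock j s hs) hℓs (by positivity)
          _ = ENNReal.ofReal ((r/2^j) * (C^(j+1) * ℓ r)) * volume (Ioc (r/2^(j+1)) (r/2^j)) := by
              rw [setLIntegral_const]
          _ = ENNReal.ofReal ((r/2^j) * (C^(j+1) * ℓ r)) * ENNReal.ofReal (r/2^(j+1)) := by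
              rw [Real.volume_Ioc]
              congr 1
              rw [pow_succ, div_mul_eq_div_div]
              ring
          _ = ENNReal.ofReal ((r/2^j) * (C^(j+1) * ℓ r) * (r/2^(j+1))) := by
              rw [← ENNReal.ofReal_mul (by positivity)]
          _ = ENNReal.ofReal (r^2 * ℓ r * (C/2) * (C/4)^j) := by
              congr 1
              have h4 : (4:ℝ)^j = 2^j * 2^j := by
                rw [← mul_pow]; norm_num
              rw [div_pow, h4, pow_succ, pow_succ]
              field_simp
          _ = ENNReal.ofReal (r^2 * ℓ r * (C/2)) * ENNReal.ofReal (C/4) ^ j := by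
              rw [← ENNReal.ofReal_pow (by positivity), ← ENNReal.ofReal_mul (by positivity)]
    _ = ENNReal.ofReal (r^2 * ℓ r * (C/2)) * (1 - ENNReal.ofReal (C/4))⁻¹ := by
        rw [ENNReal.tsum_mul_left, ENNReal.tsum_geometric]
    _ ≤ ENNReal.ofReal (r^2 * ℓ r * (2*C/(4-C))) := by
        have h1 : (1 : ℝ≥0∞) - ENNReal.ofReal (C/4) = ENNReal.ofReal (1 - C/4) := by
          rw [ENNReal.ofReal_sub _ (by positivity), ENNReal.ofReal_one]
        rw [h1, ← ENNReal.ofReal_inv_of_pos (by linarith), ← ENNReal.ofReal_mul (by positivity)]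
        refine ENNReal.ofReal_le_ofReal (le_of_eq ?_)
        have h2 : (1 - C/4) ≠ 0 := by intro h; nlinarith
        have h3 : (4 - C) ≠ 0 := by intro h; nlinarith
        field_simp
        ring

open MeasureTheory Metric Set Function MeasurableSpace
open scoped ENNReal NNReal

local notation "dim" => Module.finrank ℝ

noncomputable section

variable {E : Type*} [NormedAddCommGroup E] [NormedSpace ℝ E] [MeasurableSpace E]
  [Nontrivial E] (μ : Measure E) [FiniteDimensional ℝ E] [BorelSpace E] [μ.IsAddHaarMeasure]

lemma my_lintegral_fun_norm_addHaar (f : ℝ → ℝ≥0∞) (hf : Measurable f) :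
    ∫⁻ x, f (‖x‖) ∂μ
      = (dim E : ℝ≥0∞) * μ (ball 0 1) * ∫⁻ y in Ioi (0 : ℝ), ENNReal.ofReal (y ^ (dim E - 1)) * f y :=
  calc
    ∫⁻ x, f (‖x‖) ∂μ = ∫⁻ x : ({(0)}ᶜ : Set E), f (‖x.1‖) ∂(μ.comap (↑)) := by
      rw [lintegral_subtype_comap (measurableSet_singleton _).compl fun x ↦ f (‖x‖),
        restrict_compl_singleton]
    _ = ∫⁻ x : sphere (0 : E) 1 × Ioi (0 : ℝ), f x.2
          ∂μ.toSphere.prod (.volumeIoiPow (dim E - 1)) :=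
      by
        refine Eq.trans ?_ (μ.measurePreserving_homeomorphUnitSphereProd.lintegral_comp_emb
          (Homeomorph.measurableEmbedding _) (fun x => f x.2))
        congr 1; ext x; simp
    _ = (dim E : ℝ≥0∞) * μ (ball 0 1) * ∫⁻ y in Ioi (0 : ℝ),
          ENNReal.ofReal (y ^ (dim E - 1)) * f y := by
      have hm : AEMeasurable (fun (x : ↑(sphere (0:E) 1) × ↑(Ioi (0:ℝ))) => f ↑x.2)
          (μ.toSphere.prod (Measure.volumeIoiPow (dim E - 1))) :=
        (hf.comp (measurable_subtype_coe.comp measurable_snd)).aemeasurable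
      rw [lintegral_prod _ hm]
      simp only [lintegral_const]
      rw [Measure.volumeIoiPow,
        lintegral_withDensity_eq_lintegral_mul _
          ((measurable_subtype_coe.pow_const _).ennreal_ofReal) (show Measurable fun (y : ↑(Ioi (0:ℝ))) => f ↑y from hf.comp measurable_subtype_coe)]
      simp only [Pi.mul_apply, Function.comp_apply]
      rw [lintegral_subtype_comap measurableSet_Ioi
        (fun a => ENNReal.ofReal (a ^ (dim E - 1)) * f a)]
      rw [Measure.toSphere_apply_univ, mul_comm]

end
end
end AuxPart1

noncomputable section

open MeasureTheory Metric Set Filter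
open scoped ENNReal Topology RealInnerProductSpace

noncomputable section

lemma one_sub_cos_le_half_sq (t : ℝ) : 1 - Real.cos t ≤ t^2/2 := by
  have h1 : Real.cos (t/2) ^ 2 = 1/2 + Real.cos (2*(t/2))/2 := Real.cos_sq (t/2)
  have h2 : Real.sin (t/2)^2 + Real.cos (t/2)^2 = 1 := Real.sin_sq_add_cos_sq _
  have h3 : Real.sin (t/2)^2 ≤ (t/2)^2 := Real.sin_sq_le_sq
  have h4 : (2:ℝ)*(t/2) = t := by ring
  rw [h4] at h1
  nlinarith

lemma ae_nonneg_mul_ell (ℓ : ℝ → ℝ)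
    (hℓpos : ∀ s : ℝ, 0 < s → s < 1 → 0 < ℓ s) :
    0 ≤ᵐ[volume.restrict (Ioc (0:ℝ) 1)] fun s => s * ℓ s := by
  have h1 : ∀ᵐ x ∂(volume.restrict (Ioc (0:ℝ) 1)), x ≠ 1 := by
    refine (ae_iff).mpr ?_
    have he : {x : ℝ | ¬ x ≠ 1} = {1} := by ext; simp
    rw [he, Measure.restrict_apply (measurableSet_singleton _)]
    exact measure_mono_null inter_subset_left (measure_singleton 1)
  filter_upwards [h1, ae_restrict_mem measurableSet_Ioc] with x hx1 hx2
  have hxlt : x < 1 := lt_of_le_of_ne hx2.2 hx1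
  exact le_of_lt (mul_pos hx2.1 (hℓpos x hx2.1 hxlt))

def sigE (d : ℕ) : ℝ≥0∞ := (d : ℝ≥0∞) * volume (ball (0 : EuclideanSpace ℝ (Fin d)) 1)

lemma sigE_ne_zero (d : ℕ) (hd : 1 ≤ d) : sigE d ≠ 0 := by
  haveI : Nontrivial (EuclideanSpace ℝ (Fin d)) :=
    Module.nontrivial_of_finrank_pos (R := ℝ) (by rw [finrank_euclideanSpace_fin]; omega)
  refine mul_ne_zero ?_ ?_
  · simp only [ne_eq, Nat.cast_eq_zero]; omega
  · exact (measure_ball_pos volume 0 one_pos).ne'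

lemma sigE_ne_top (d : ℕ) : sigE d ≠ ⊤ :=
  ENNReal.mul_ne_top (ENNReal.natCast_ne_top d) measure_ball_lt_top.ne

lemma polar_indicator (d : ℕ) (hd : 1 ≤ d) (G : ℝ → ℝ≥0∞) (hG : Measurable G)
    (S : Set ℝ) (hS : MeasurableSet S) (hS0 : S ⊆ Ioi 0) :
    ∫⁻ h : EuclideanSpace ℝ (Fin d) in ({0}ᶜ : Set (EuclideanSpace ℝ (Fin d))),
        S.indicator G ‖h‖
      = sigE d * ∫⁻ y in S, ENNReal.ofReal (y ^ (d-1)) * G y := by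
  haveI : Nontrivial (EuclideanSpace ℝ (Fin d)) :=
    Module.nontrivial_of_finrank_pos (R := ℝ) (by rw [finrank_euclideanSpace_fin]; omega)
  rw [MeasureTheory.restrict_compl_singleton]
  rw [my_lintegral_fun_norm_addHaar volume (S.indicator G) (hG.indicator hS)]
  simp only [finrank_euclideanSpace_fin]
  rw [sigE]
  congr 1
  have h1 : ∫⁻ y in Ioi (0:ℝ), ENNReal.ofReal (y ^ (d-1)) * S.indicator G y
      = ∫⁻ y in Ioi (0:ℝ), S.indicator (fun y => ENNReal.ofReal (y ^ (d-1)) * G y) y := by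
    refine setLIntegral_congr_fun measurableSet_Ioi (fun y _ => ?_)
    by_cases h : y ∈ S <;> simp [h]
  rw [h1, lintegral_indicator hS, Measure.restrict_restrict hS,
    inter_eq_left.mpr (fun y hy => hS0 hy)]

lemma ae_nonneg_ell_div (ℓ : ℝ → ℝ)
    (hℓpos : ∀ s : ℝ, 0 < s → s < 1 → 0 < ℓ s) (a : ℝ) (ha0 : 0 < a) :
    0 ≤ᵐ[volume.restrict (Ioc a 1)] fun s => ℓ s / s := by
  have h1 : ∀ᵐ x ∂(volume.restrict (Ioc a (1:ℝ))), x ≠ 1 := by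
    refine (ae_iff).mpr ?_
    have he : {x : ℝ | ¬ x ≠ 1} = {1} := by ext; simp
    rw [he, Measure.restrict_apply (measurableSet_singleton _)]
    exact measure_mono_null inter_subset_left (measure_singleton 1)
  filter_upwards [h1, ae_restrict_mem measurableSet_Ioc] with x hx1 hx2
  have hx0 : 0 < x := lt_trans ha0 hx2.1
  have hxlt : x < 1 := lt_of_le_of_ne hx2.2 hx1
  exact le_of_lt (div_pos (hℓpos x hx0 hxlt) hx0)

lemma Lfun_pos (ℓ : ℝ → ℝ) (hℓpos : ∀ s : ℝ, 0 < s → s < 1 → 0 < ℓ s)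
    (a : ℝ) (ha0 : 0 < a) (ha1 : a < 1)
    (hint : IntervalIntegrable (fun s => ℓ s / s) volume a 1) : 0 < Lfun ℓ a :=
  intervalIntegral.intervalIntegral_pos_of_pos_on hint
    (fun x hx => div_pos (hℓpos x (lt_trans ha0 hx.1) hx.2) (lt_trans ha0 hx.1)) ha1

lemma Lfun_mono (ℓ : ℝ → ℝ) (hℓpos : ∀ s : ℝ, 0 < s → s < 1 → 0 < ℓ s)
    (a b : ℝ) (ha0 : 0 < a) (hab : a ≤ b) (hb1 : b ≤ 1)
    (hint : IntervalIntegrable (fun s => ℓ s / s) volume a 1) :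
    Lfun ℓ b ≤ Lfun ℓ a :=
  intervalIntegral.integral_mono_interval hab hb1 le_rfl
    (ae_nonneg_ell_div ℓ hℓpos a ha0) hint

lemma ell_le_L (ℓ : ℝ → ℝ)
    (hℓpos : ∀ s : ℝ, 0 < s → s < 1 → 0 < ℓ s)
    (t₀ C : ℝ) (ht₀0 : 0 < t₀) (ht₀5 : t₀ ≤ 1/5) (hC1 : 1 ≤ C)
    (hC : ∀ t : ℝ, 0 < t → t ≤ t₀ → ∀ lam : ℝ, 1/2 ≤ lam → lam ≤ 1 → ℓ (lam * t) ≤ C * ℓ t)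
    (r : ℝ) (hr0 : 0 < r) (h2r : 2*r ≤ t₀)
    (hint : IntervalIntegrable (fun s => ℓ s / s) volume r 1) :
    ℓ r ≤ (C / Real.log 2) * Lfun ℓ r := by
  have hC0 : (0:ℝ) < C := by linarith
  have hl2 : (0:ℝ) < Real.log 2 := Real.log_pos (by norm_num)
  have h2r1 : 2*r ≤ 1 := by linarith
  have hrr : r ≤ 2*r := by linarith
  have hint2 : IntervalIntegrable (fun s => ℓ s / s) volume r (2*r) := by
    apply hint.mono_set
    rw [uIcc_of_le hrr, uIcc_of_le (by linarith : r ≤ (1:ℝ))]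
    exact Icc_subset_Icc le_rfl (by linarith)
  have hintc : IntervalIntegrable (fun s => (ℓ r / C) * (1/s)) volume r (2*r) := by
    apply ContinuousOn.intervalIntegrable
    apply ContinuousOn.mul continuousOn_const
    apply ContinuousOn.div continuousOn_const continuousOn_id
    intro x hx
    rw [uIcc_of_le hrr] at hx
    exact ne_of_gt (lt_of_lt_of_le hr0 hx.1)
  have hstep1 : ∫ s in r..(2*r), (ℓ r / C) * (1/s) ≤ ∫ s in r..(2*r), ℓ s / s := by
    refine intervalIntegral.integral_mono_on hrr hintc hint2 fun x hx => ?_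
    have hx0 : 0 < x := lt_of_lt_of_le hr0 hx.1
    have hxt : x ≤ t₀ := le_trans hx.2 h2r
    have hlam_lb : 1/2 ≤ r / x := by
      rw [le_div_iff₀ hx0]
      linarith [hx.2]
    have hlam_ub : r / x ≤ 1 := by
      rw [div_le_one hx0]; exact hx.1
    have h1 : ℓ ((r/x) * x) ≤ C * ℓ x := hC x hx0 hxt _ hlam_lb hlam_ub
    rw [div_mul_cancel₀ r hx0.ne'] at h1
    have h2 : ℓ r / C ≤ ℓ x := by
      rw [div_le_iff₀ hC0]; linarith
    calc (ℓ r / C) * (1/x) ≤ ℓ x * (1/x) :=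
          mul_le_mul_of_nonneg_right h2 (by positivity)
    _ = ℓ x / x := by ring
  have hstep0 : ∫ s in r..(2*r), (ℓ r / C) * (1/s) = (ℓ r / C) * Real.log 2 := by
    rw [intervalIntegral.integral_const_mul]
    congr 1
    rw [integral_one_div]
    · congr 1
      field_simp
    · intro h
      rw [uIcc_of_le hrr] at h
      linarith [h.1]
  have hstep2 : ∫ s in r..(2*r), ℓ s / s ≤ Lfun ℓ r :=
    intervalIntegral.integral_mono_interval le_rfl hrr (by linarith)
      (ae_nonneg_ell_div ℓ hℓpos r hr0) hint
  have hfin : (ℓ r / C) * Real.log 2 ≤ Lfun ℓ r := by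
    rw [← hstep0]; exact le_trans hstep1 hstep2
  calc ℓ r = (C / Real.log 2) * ((ℓ r / C) * Real.log 2) := by field_simp
  _ ≤ (C / Real.log 2) * Lfun ℓ r := mul_le_mul_of_nonneg_left hfin (by positivity)

lemma pow_radial_id1 (d : ℕ) (hd : 1 ≤ d) (A : ℝ) (hA : 0 ≤ A) (ℓ : ℝ → ℝ) (y : ℝ) (hy : 0 < y) :
    ENNReal.ofReal (y^(d-1)) * ENNReal.ofReal (A * (y^2 * (ℓ y / y^d)))
      = ENNReal.ofReal A * ENNReal.ofReal (y * ℓ y) := by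
  rw [← ENNReal.ofReal_mul (by positivity), ← ENNReal.ofReal_mul hA]
  congr 1
  have h2 : (y:ℝ)^d ≠ 0 := (pow_pos hy d).ne'
  have h1 : y ^ (d - 1) * y ^ 2 = y * y ^ d := by
    rw [← pow_add, ← pow_succ']
    congr 1
    omega
  calc y^(d-1) * (A * (y^2 * (ℓ y / y^d)))
      = A * ((y^(d-1) * y^2) * ℓ y / y^d) := by ring
    _ = A * (y * (y^d * ℓ y / y^d)) := by rw [h1]; ring
    _ = A * (y * ℓ y) := by rw [mul_div_cancel_left₀ _ h2]

lemma pow_radial_id2 (d : ℕ) (hd : 1 ≤ d) (A : ℝ) (hA : 0 ≤ A) (ℓ : ℝ → ℝ) (y : ℝ) (hy : 0 < y) :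
    ENNReal.ofReal (y^(d-1)) * ENNReal.ofReal (A * (ℓ y / y^d))
      = ENNReal.ofReal A * ENNReal.ofReal (ℓ y / y) := by
  rw [← ENNReal.ofReal_mul (by positivity), ← ENNReal.ofReal_mul hA]
  congr 1
  have h2 : (y:ℝ)^(d-1) ≠ 0 := (pow_pos hy _).ne'
  have h1 : (y:ℝ)^d = y^(d-1) * y := by
    rw [← pow_succ]
    congr 1
    omega
  rw [h1]
  field_simp

set_option maxHeartbeats 1000000 in
/-- There exists `c > 0`, depending only on `d, K₀, κ, α, ℓ`, such that
`ψ(ξ) ≤ c L(|ξ|⁻¹)` for all `ξ ∈ ℝ^d` with `|ξ| ≥ 5`. -/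
theorem statement3 (d : ℕ) (hd : 1 ≤ d) (K₀ κ α : ℝ) (hK₀ : 0 < K₀) (hκ : 1 < κ)
    (hα₀ : 0 ≤ α) (hα₂ : α < 2) (ℓ : ℝ → ℝ) (hℓmeas : Measurable ℓ)
    (hℓpos : ∀ s : ℝ, 0 < s → s < 1 → 0 < ℓ s)
    (hℓbdd : LocBddAway ℓ) (hℓreg : RegVaryAt0 ℓ (-α)) :
    ∃ c : ℝ, 0 < c ∧
      ∀ k : EuclideanSpace ℝ (Fin d) → ℝ, KernelCondsTI d K₀ κ ℓ k →
        ∀ ξ : EuclideanSpace ℝ (Fin d), 5 ≤ ‖ξ‖ →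
          psiFun d k ξ ≤ c * Lfun ℓ (‖ξ‖⁻¹) := by
  classical
  have hκ0 : (0:ℝ) < κ := by linarith
  have hκinv : (0:ℝ) < κ⁻¹ := inv_pos.mpr hκ0
  by_cases Hint : IntegrableOn (fun s => s * ℓ s) (Ioc (0:ℝ) 1) volume
  · -- main case
    have hl2 : (0:ℝ) < Real.log 2 := Real.log_pos one_lt_two
    set ε := Real.log 2 * (2 - α) / 2 with hε_def
    have hε : 0 < ε := by rw [hε_def]; nlinarith
    obtain ⟨t₀, ht₀0, ht₀5, hUCT⟩ := uct α hα₀ ℓ hℓmeas hℓpos hℓreg ε hε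
    set C := Real.exp (α * Real.log 2 + ε) with hC_def
    have hC1 : 1 ≤ C := Real.one_le_exp (by nlinarith)
    have hC0 : (0:ℝ) < C := by linarith
    have hC4 : C < 4 := by
      have h4 : Real.exp (2 * Real.log 2) = 4 := by
        rw [two_mul, Real.exp_add, Real.exp_log (by norm_num : (0:ℝ) < 2)]; norm_num
      rw [hC_def, ← h4]
      exact Real.exp_lt_exp.mpr (by nlinarith)
    have hq : (0:ℝ) < 2*C/(4-C) := div_pos (by linarith) (by linarith)
    have hIntIoc : ∀ a : ℝ, 0 < a → IntegrableOn (fun s => ℓ s / s) (Ioc a 1) volume := by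
      intro a ha
      rcases le_or_gt a 1 with ha1 | ha1
      · have h1 : IntegrableOn (fun s => s * ℓ s) (Ioc a 1) volume :=
          Hint.mono_set (Ioc_subset_Ioc_left ha.le)
        have h2 : IntegrableOn (fun s => (a⁻¹*a⁻¹) * (s * ℓ s)) (Ioc a 1) volume :=
          h1.const_mul _
        refine h2.mono' (hℓmeas.div measurable_id).aestronglyMeasurable ?_
        filter_upwards [ae_restrict_mem measurableSet_Ioc,
          ae_nonneg_ell_div ℓ hℓpos a ha] with s hs hnn
        have hs0 : 0 < s := lt_trans ha hs.1
        have hl : 0 ≤ ℓ s := by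
          have h3 : ℓ s = (ℓ s / s) * s := (div_mul_cancel₀ _ hs0.ne').symm
          rw [h3]; exact mul_nonneg hnn hs0.le
        rw [Real.norm_eq_abs, abs_of_nonneg hnn]
        have h3 : a*a ≤ s*s := by nlinarith [hs.1]
        rw [div_le_iff₀ hs0]
        have ha2 : (0:ℝ) < a*a := mul_pos ha ha
        have h4 : a⁻¹*a⁻¹*(s*ℓ s)*s = (s*s)*(ℓ s)/(a*a) := by field_simp
        rw [h4, le_div_iff₀ ha2]
        nlinarith
      · rw [Set.Ioc_eq_empty (by linarith)]
        exact integrableOn_empty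
    have hIntInt : ∀ a : ℝ, 0 < a → a ≤ 1 →
        IntervalIntegrable (fun s => ℓ s / s) volume a 1 := fun a ha ha1 =>
      (intervalIntegrable_iff_integrableOn_Ioc_of_le ha1).mpr (hIntIoc a ha)
    have hLfun_eq : ∀ a : ℝ, a ≤ 1 → Lfun ℓ a = ∫ s in Ioc a 1, ℓ s / s := fun a h =>
      intervalIntegral.integral_of_le h
    have hL₅ : 0 < Lfun ℓ (1/5) := Lfun_pos ℓ hℓpos (1/5) (by norm_num) (by norm_num)
      (hIntInt _ (by norm_num) (by norm_num))
    set L₅ := Lfun ℓ (1/5) with hL5_def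
    set G₁ := ∫ s in Ioc (0:ℝ) 1, s * ℓ s with hG1_def
    have hG₁0 : 0 ≤ G₁ := integral_nonneg_of_ae (ae_nonneg_mul_ell ℓ hℓpos)
    set σT := (sigE d).toReal with hσT_def
    have hσT : 0 < σT := ENNReal.toReal_pos (sigE_ne_zero d hd) (sigE_ne_top d)
    have hσeq : sigE d = ENNReal.ofReal σT := (ENNReal.ofReal_toReal (sigE_ne_top d)).symm
    set cA := κ/2 * (2*C/(4-C)) * (C / Real.log 2) with hcA_def
    have hcA : 0 < cA := mul_pos (mul_pos (by linarith) hq) (div_pos hC0 hl2)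
    set cB := (κ/2 * (2/t₀)^2 * G₁) / L₅ with hcB_def
    have hcB : 0 ≤ cB :=
      div_nonneg (mul_nonneg (mul_nonneg (by linarith) (by positivity)) hG₁0) hL₅.le
    set cD := max cA cB with hcD_def
    have hcD : 0 < cD := lt_of_lt_of_le hcA (le_max_left _ _)
    refine ⟨σT * cD + σT * (2*κ) + 2*K₀/L₅,
      add_pos (add_pos (mul_pos hσT hcD) (mul_pos hσT (by linarith)))
        (div_pos (by linarith) hL₅), ?_⟩
    intro k hk ξ hξ
    obtain ⟨hkmeas, hknn, hksym, hkK, hkbd⟩ := hk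
    have hξ0 : (0:ℝ) < ‖ξ‖ := by linarith
    set r := ‖ξ‖⁻¹ with hr_def
    have hr0 : 0 < r := inv_pos.mpr hξ0
    have hr5 : r ≤ 1/5 := by
      rw [hr_def, show (1:ℝ)/5 = 5⁻¹ by norm_num]
      exact inv_anti₀ (by norm_num) hξ
    have hr1 : r < 1 := by linarith
    have hrle1 : r ≤ 1 := hr1.le
    have hrdprod : ‖ξ‖^2 * r^2 = 1 := by
      rw [hr_def, ← mul_pow, mul_inv_cancel₀ hξ0.ne']; norm_num
    have hLr : 0 < Lfun ℓ r := Lfun_pos ℓ hℓpos r hr0 hr1 (hIntInt r hr0 hrle1)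
    have hLrge : L₅ ≤ Lfun ℓ r := Lfun_mono ℓ hℓpos r (1/5) hr0 hr5 (by norm_num)
      (hIntInt r hr0 hrle1)
    -- measurability
    have hinner : Continuous fun h : EuclideanSpace ℝ (Fin d) => (⟪ξ, h⟫ : ℝ) :=
      continuous_const.inner continuous_id
    have hfmeas : Measurable fun h : EuclideanSpace ℝ (Fin d) =>
        (1 - Real.cos ⟪ξ, h⟫) * k h :=
      (measurable_const.sub (Real.continuous_cos.comp hinner).measurable).mul hkmeas
    have hm2 : Measurable fun y : ℝ => ENNReal.ofReal (y * ℓ y) := by fun_prop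
    have hm3 : Measurable fun y : ℝ => ENNReal.ofReal (ℓ y / y) := by fun_prop
    have hF1meas : Measurable fun s : ℝ =>
        ENNReal.ofReal ((κ * ‖ξ‖^2/2) * (s^2 * (ℓ s / s^d))) := by fun_prop
    have hF2meas : Measurable fun s : ℝ => ENNReal.ofReal ((2*κ) * (ℓ s / s^d)) := by fun_prop
    have hg1meas : Measurable ((Ioc (0:ℝ) r).indicator
        (fun s => ENNReal.ofReal ((κ * ‖ξ‖^2/2) * (s^2 * (ℓ s / s^d))))) :=
      hF1meas.indicator measurableSet_Ioc
    have hg2meas : Measurable ((Ioc r 1).indicator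
        (fun s => ENNReal.ofReal ((2*κ) * (ℓ s / s^d)))) :=
      hF2meas.indicator measurableSet_Ioc
    have hmink : Measurable fun h : EuclideanSpace ℝ (Fin d) =>
        ENNReal.ofReal (min 1 (‖h‖^2) * k h) := by fun_prop
    -- psi as lintegral
    have hpsi : psiFun d k ξ = (∫⁻ h in ({0}ᶜ : Set (EuclideanSpace ℝ (Fin d))),
        ENNReal.ofReal ((1 - Real.cos ⟪ξ, h⟫) * k h)).toReal := by
      simp only [psiFun]
      exact integral_eq_lintegral_of_nonneg_ae
        (ae_of_all _ fun h => mul_nonneg (by linarith [Real.cos_le_one ⟪ξ,h⟫]) (hknn h))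
        hfmeas.aestronglyMeasurable
    -- pointwise bound
    have hpoint : ∀ h : EuclideanSpace ℝ (Fin d), h ≠ 0 →
        ENNReal.ofReal ((1 - Real.cos ⟪ξ, h⟫) * k h)
          ≤ (Ioc (0:ℝ) r).indicator
              (fun s => ENNReal.ofReal ((κ * ‖ξ‖^2/2) * (s^2 * (ℓ s / s^d)))) ‖h‖
            + (Ioc r 1).indicator (fun s => ENNReal.ofReal ((2*κ) * (ℓ s / s^d))) ‖h‖
            + ENNReal.ofReal (2 * (min 1 (‖h‖^2) * k h)) := by
      intro h hne
      have hn0 : 0 < ‖h‖ := norm_pos_iff.mpr hne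
      have hknn' := hknn h
      have hcos : Real.cos ⟪ξ,h⟫ ≤ 1 := Real.cos_le_one _
      have hcos2 : -1 ≤ Real.cos ⟪ξ,h⟫ := Real.neg_one_le_cos _
      rcases le_or_gt ‖h‖ r with hle | hgt
      · have hmem : ‖h‖ ∈ Ioc (0:ℝ) r := ⟨hn0, hle⟩
        have h1le : ‖h‖ ≤ 1 := le_trans hle (by linarith)
        have hkb := (hkbd h hn0 h1le).2
        have e1 : 1 - Real.cos ⟪ξ,h⟫ ≤ ⟪ξ,h⟫^2/2 := one_sub_cos_le_half_sq _
        have e2 : ⟪ξ,h⟫^2 ≤ ‖ξ‖^2 * ‖h‖^2 := by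
          rw [← mul_pow]
          calc ⟪ξ,h⟫^2 = |⟪ξ,h⟫|^2 := (sq_abs _).symm
          _ ≤ (‖ξ‖*‖h‖)^2 := pow_le_pow_left₀ (abs_nonneg _) (abs_real_inner_le_norm ξ h) 2
        have e3 : (1 - Real.cos ⟪ξ,h⟫) * k h ≤ (κ * ‖ξ‖^2/2) * (‖h‖^2 * (ℓ ‖h‖ / ‖h‖^d)) := by
          calc (1 - Real.cos ⟪ξ,h⟫) * k h ≤ (⟪ξ,h⟫^2/2) * k h :=
                mul_le_mul_of_nonneg_right e1 hknn'
          _ ≤ (‖ξ‖^2 * ‖h‖^2/2) * k h :=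
                mul_le_mul_of_nonneg_right (by linarith) hknn'
          _ ≤ (‖ξ‖^2 * ‖h‖^2/2) * (κ * (ℓ ‖h‖ / ‖h‖^d)) :=
                mul_le_mul_of_nonneg_left hkb (by positivity)
          _ = (κ * ‖ξ‖^2/2) * (‖h‖^2 * (ℓ ‖h‖ / ‖h‖^d)) := by ring
        refine le_trans ?_ (le_trans (self_le_add_right _ _) (self_le_add_right _ _))
        rw [indicator_of_mem hmem]
        exact ENNReal.ofReal_le_ofReal e3
      · rcases le_or_gt ‖h‖ 1 with h1le | h1gt
        · have hmem : ‖h‖ ∈ Ioc r 1 := ⟨hgt, h1le⟩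
          have hkb := (hkbd h hn0 h1le).2
          have e3 : (1 - Real.cos ⟪ξ,h⟫) * k h ≤ (2*κ) * (ℓ ‖h‖ / ‖h‖^d) := by
            calc (1 - Real.cos ⟪ξ,h⟫) * k h ≤ 2 * k h :=
                  mul_le_mul_of_nonneg_right (by linarith) hknn'
            _ ≤ 2 * (κ * (ℓ ‖h‖/‖h‖^d)) := mul_le_mul_of_nonneg_left hkb (by norm_num)
            _ = (2*κ) * (ℓ ‖h‖/‖h‖^d) := by ring
          refine le_trans ?_ (le_trans le_add_self (self_le_add_right _ _))
          rw [indicator_of_mem hmem]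
          exact ENNReal.ofReal_le_ofReal e3
        · have hmineq : min 1 (‖h‖^2) = 1 := min_eq_left (by nlinarith)
          have e3 : (1 - Real.cos ⟪ξ,h⟫) * k h ≤ 2 * (min 1 (‖h‖^2) * k h) := by
            rw [hmineq, one_mul]
            exact mul_le_mul_of_nonneg_right (by linarith) hknn'
          exact le_trans (ENNReal.ofReal_le_ofReal e3) le_add_self
    -- sum bound
    have hsum : (∫⁻ h in ({0}ᶜ : Set (EuclideanSpace ℝ (Fin d))),
        ENNReal.ofReal ((1 - Real.cos ⟪ξ, h⟫) * k h))
          ≤ (∫⁻ h in ({0}ᶜ : Set (EuclideanSpace ℝ (Fin d))),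
              (Ioc (0:ℝ) r).indicator
                (fun s => ENNReal.ofReal ((κ * ‖ξ‖^2/2) * (s^2 * (ℓ s / s^d)))) ‖h‖)
            + (∫⁻ h in ({0}ᶜ : Set (EuclideanSpace ℝ (Fin d))),
                (Ioc r 1).indicator (fun s => ENNReal.ofReal ((2*κ) * (ℓ s / s^d))) ‖h‖)
            + ∫⁻ h in ({0}ᶜ : Set (EuclideanSpace ℝ (Fin d))),
                ENNReal.ofReal (2 * (min 1 (‖h‖^2) * k h)) := by
      have hae : ∀ᵐ h ∂(volume.restrict ({0}ᶜ : Set (EuclideanSpace ℝ (Fin d)))),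
          ENNReal.ofReal ((1 - Real.cos ⟪ξ, h⟫) * k h)
            ≤ (Ioc (0:ℝ) r).indicator
                (fun s => ENNReal.ofReal ((κ * ‖ξ‖^2/2) * (s^2 * (ℓ s / s^d)))) ‖h‖
              + (Ioc r 1).indicator (fun s => ENNReal.ofReal ((2*κ) * (ℓ s / s^d))) ‖h‖
              + ENNReal.ofReal (2 * (min 1 (‖h‖^2) * k h)) := by
        filter_upwards [ae_restrict_mem
          (measurableSet_singleton (0:EuclideanSpace ℝ (Fin d))).compl] with h hh
        exact hpoint h hh
      refine le_trans (lintegral_mono_ae hae) (le_of_eq ?_)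
      rw [lintegral_add_right _ (by fun_prop : Measurable fun h : EuclideanSpace ℝ (Fin d) =>
        ENNReal.ofReal (2 * (min 1 (‖h‖^2) * k h)))]
      rw [lintegral_add_right _ (show Measurable fun h : EuclideanSpace ℝ (Fin d) =>
        (Ioc r 1).indicator (fun s => ENNReal.ofReal ((2*κ) * (ℓ s / s^d))) ‖h‖ from
          hg2meas.comp measurable_norm)]
    -- T1
    have hT1 : (∫⁻ h in ({0}ᶜ : Set (EuclideanSpace ℝ (Fin d))),
        (Ioc (0:ℝ) r).indicator
          (fun s => ENNReal.ofReal ((κ * ‖ξ‖^2/2) * (s^2 * (ℓ s / s^d)))) ‖h‖)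
          ≤ ENNReal.ofReal (σT * (cD * Lfun ℓ r)) := by
      rw [polar_indicator d hd _ hF1meas (Ioc (0:ℝ) r) measurableSet_Ioc (fun y hy => hy.1)]
      have hcongr : ∫⁻ y in Ioc (0:ℝ) r, ENNReal.ofReal (y ^ (d-1)) *
          ENNReal.ofReal ((κ * ‖ξ‖^2/2) * (y^2 * (ℓ y / y^d)))
            = ∫⁻ y in Ioc (0:ℝ) r, ENNReal.ofReal (κ * ‖ξ‖^2/2) * ENNReal.ofReal (y * ℓ y) :=
        setLIntegral_congr_fun measurableSet_Ioc (fun y hy =>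
          pow_radial_id1 d hd _ (by positivity) ℓ y hy.1)
      rw [hcongr, lintegral_const_mul _ hm2]
      have hJ : ENNReal.ofReal (κ * ‖ξ‖^2/2) * (∫⁻ y in Ioc (0:ℝ) r, ENNReal.ofReal (y * ℓ y))
          ≤ ENNReal.ofReal (cD * Lfun ℓ r) := by
        rcases le_or_gt r (t₀/2) with hcase | hcase
        · have hkar := karamata_blocks ℓ hℓpos t₀ C ht₀0 ht₀5 hC1 hC4 hUCT r hr0
            (by linarith)
          have hell := ell_le_L ℓ hℓpos t₀ C ht₀0 ht₀5 hC1 hUCT r hr0 (by linarith)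
            (hIntInt r hr0 hrle1)
          calc ENNReal.ofReal (κ * ‖ξ‖^2/2) * (∫⁻ y in Ioc (0:ℝ) r, ENNReal.ofReal (y * ℓ y))
              ≤ ENNReal.ofReal (κ * ‖ξ‖^2/2) * ENNReal.ofReal (r^2 * ℓ r * (2*C/(4-C))) :=
                mul_le_mul_right hkar _
          _ = ENNReal.ofReal (κ * ‖ξ‖^2/2 * (r^2 * ℓ r * (2*C/(4-C)))) :=
                (ENNReal.ofReal_mul (by positivity)).symm
          _ ≤ ENNReal.ofReal (cD * Lfun ℓ r) := by
                refine ENNReal.ofReal_le_ofReal ?_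
                have h1 : κ * ‖ξ‖^2/2 * (r^2 * ℓ r * (2*C/(4-C)))
                    = (κ/2*(2*C/(4-C))) * (‖ξ‖^2 * r^2) * ℓ r := by ring
                rw [h1, hrdprod, mul_one]
                calc (κ/2*(2*C/(4-C))) * ℓ r
                    ≤ (κ/2*(2*C/(4-C))) * ((C / Real.log 2) * Lfun ℓ r) :=
                      mul_le_mul_of_nonneg_left hell
                        (le_of_lt (mul_pos (by linarith) hq))
                _ = cA * Lfun ℓ r := by rw [hcA_def]; ring
                _ ≤ cD * Lfun ℓ r :=
                      mul_le_mul_of_nonneg_right (le_max_left _ _) hLr.le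
        · have hmono2 : (∫⁻ y in Ioc (0:ℝ) r, ENNReal.ofReal (y * ℓ y))
              ≤ ∫⁻ y in Ioc (0:ℝ) 1, ENNReal.ofReal (y * ℓ y) :=
            lintegral_mono_set (Ioc_subset_Ioc_right hrle1)
          have hG1eq : (∫⁻ y in Ioc (0:ℝ) 1, ENNReal.ofReal (y * ℓ y))
              = ENNReal.ofReal G₁ :=
            (ofReal_integral_eq_lintegral_ofReal Hint (ae_nonneg_mul_ell ℓ hℓpos)).symm
          have hξbd : ‖ξ‖ ≤ 2/t₀ := by
            have h2 : r⁻¹ ≤ (t₀/2)⁻¹ := inv_anti₀ (by linarith) hcase.le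
            rw [hr_def, inv_inv] at h2
            calc ‖ξ‖ ≤ (t₀/2)⁻¹ := h2
            _ = 2/t₀ := by rw [inv_div]
          calc ENNReal.ofReal (κ * ‖ξ‖^2/2) * (∫⁻ y in Ioc (0:ℝ) r, ENNReal.ofReal (y * ℓ y))
              ≤ ENNReal.ofReal (κ * ‖ξ‖^2/2) * ENNReal.ofReal G₁ :=
                mul_le_mul_right (hmono2.trans_eq hG1eq) _
          _ = ENNReal.ofReal (κ * ‖ξ‖^2/2 * G₁) := (ENNReal.ofReal_mul (by positivity)).symm
          _ ≤ ENNReal.ofReal (cD * Lfun ℓ r) := by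
                refine ENNReal.ofReal_le_ofReal ?_
                have h1 : κ * ‖ξ‖^2/2 * G₁ ≤ κ/2 * (2/t₀)^2 * G₁ := by
                  have h2 : ‖ξ‖^2 ≤ (2/t₀)^2 :=
                    pow_le_pow_left₀ (norm_nonneg ξ) hξbd 2
                  have h3 := mul_le_mul_of_nonneg_right
                    (mul_le_mul_of_nonneg_left h2 (by linarith : (0:ℝ) ≤ κ/2)) hG₁0
                  linarith [h3]
                have h2 : κ/2 * (2/t₀)^2 * G₁ = cB * L₅ := by
                  rw [hcB_def, div_mul_cancel₀ _ hL₅.ne']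
                calc κ * ‖ξ‖^2/2 * G₁ ≤ cB * L₅ := by rw [← h2]; exact h1
                _ ≤ cB * Lfun ℓ r := mul_le_mul_of_nonneg_left hLrge hcB
                _ ≤ cD * Lfun ℓ r :=
                      mul_le_mul_of_nonneg_right (le_max_right _ _) hLr.le
      calc sigE d * (ENNReal.ofReal (κ * ‖ξ‖^2/2)
            * ∫⁻ y in Ioc (0:ℝ) r, ENNReal.ofReal (y * ℓ y))
          ≤ sigE d * ENNReal.ofReal (cD * Lfun ℓ r) := mul_le_mul_right hJ _
      _ = ENNReal.ofReal σT * ENNReal.ofReal (cD * Lfun ℓ r) := by rw [← hσeq]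
      _ = ENNReal.ofReal (σT * (cD * Lfun ℓ r)) := (ENNReal.ofReal_mul hσT.le).symm
    -- T2
    have hT2 : (∫⁻ h in ({0}ᶜ : Set (EuclideanSpace ℝ (Fin d))),
        (Ioc r 1).indicator (fun s => ENNReal.ofReal ((2*κ) * (ℓ s / s^d))) ‖h‖)
          ≤ ENNReal.ofReal (σT * (2*κ * Lfun ℓ r)) := by
      rw [polar_indicator d hd _ hF2meas (Ioc r 1) measurableSet_Ioc
        (fun y hy => lt_trans hr0 hy.1)]
      have hcongr : ∫⁻ y in Ioc r 1, ENNReal.ofReal (y ^ (d-1)) *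
          ENNReal.ofReal ((2*κ) * (ℓ y / y^d))
            = ∫⁻ y in Ioc r 1, ENNReal.ofReal (2*κ) * ENNReal.ofReal (ℓ y / y) :=
        setLIntegral_congr_fun measurableSet_Ioc (fun y hy =>
          pow_radial_id2 d hd _ (by positivity) ℓ y (lt_trans hr0 hy.1))
      rw [hcongr, lintegral_const_mul _ hm3]
      have hLint : (∫⁻ y in Ioc r 1, ENNReal.ofReal (ℓ y / y))
          = ENNReal.ofReal (Lfun ℓ r) := by
        rw [← ofReal_integral_eq_lintegral_ofReal (hIntIoc r hr0)
          (ae_nonneg_ell_div ℓ hℓpos r hr0), hLfun_eq r hrle1]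
      rw [hLint, hσeq, ← ENNReal.ofReal_mul (by linarith : (0:ℝ) ≤ 2*κ),
        ← ENNReal.ofReal_mul hσT.le]
    -- T3
    have hT3 : (∫⁻ h in ({0}ᶜ : Set (EuclideanSpace ℝ (Fin d))),
        ENNReal.ofReal (2 * (min 1 (‖h‖^2) * k h))) ≤ ENNReal.ofReal (2*K₀) := by
      have hcong : ∀ h : EuclideanSpace ℝ (Fin d),
          ENNReal.ofReal (2 * (min 1 (‖h‖^2) * k h))
            = 2 * ENNReal.ofReal (min 1 (‖h‖^2) * k h) := fun h => by
        rw [ENNReal.ofReal_mul (by norm_num : (0:ℝ) ≤ 2)]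
        norm_num
      simp_rw [hcong]
      rw [lintegral_const_mul _ hmink]
      calc 2 * (∫⁻ h in ({0}ᶜ : Set (EuclideanSpace ℝ (Fin d))),
            ENNReal.ofReal (min 1 (‖h‖^2) * k h)) ≤ 2 * ENNReal.ofReal K₀ :=
            mul_le_mul_right hkK _
      _ = ENNReal.ofReal (2*K₀) := by
            rw [ENNReal.ofReal_mul (by norm_num : (0:ℝ) ≤ 2)]
            norm_num
    -- conclude
    rw [hpsi]
    refine ENNReal.toReal_le_of_le_ofReal
      (mul_nonneg (by positivity) hLr.le) ?_
    refine le_trans hsum (le_trans (add_le_add (add_le_add hT1 hT2) hT3) ?_)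
    rw [← ENNReal.ofReal_add (by positivity) (by positivity),
      ← ENNReal.ofReal_add (by positivity) (by positivity)]
    refine ENNReal.ofReal_le_ofReal ?_
    have hK : 2*K₀ ≤ (2*K₀/L₅) * Lfun ℓ r := by
      have h1 : (2*K₀/L₅) * L₅ ≤ (2*K₀/L₅) * Lfun ℓ r :=
        mul_le_mul_of_nonneg_left hLrge (by positivity)
      rw [div_mul_cancel₀ _ hL₅.ne'] at h1
      exact h1
    have hexpand : (σT*cD + σT*(2*κ) + 2*K₀/L₅) * Lfun ℓ r
        = σT*(cD*Lfun ℓ r) + σT*(2*κ*Lfun ℓ r) + (2*K₀/L₅)*Lfun ℓ r := by ring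
    rw [hexpand]
    linarith [hK]

  · -- no admissible kernel exists
    refine ⟨1, one_pos, fun k hk => absurd hk.2.2.2.1 ?_⟩
    rw [not_le]
    have hFmeas : Measurable fun s : ℝ => ENNReal.ofReal (κ⁻¹ * (s^2 * (ℓ s / s^d))) := by
      refine ENNReal.measurable_ofReal.comp ?_
      exact measurable_const.mul ((measurable_id.pow_const 2).mul
        (hℓmeas.div (measurable_id.pow_const d)))
    have hmono : ∫⁻ h : EuclideanSpace ℝ (Fin d) in ({0}ᶜ : Set (EuclideanSpace ℝ (Fin d))),
        (Ioc (0:ℝ) 1).indicator (fun s => ENNReal.ofReal (κ⁻¹ * (s^2 * (ℓ s / s^d)))) ‖h‖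
          ≤ ∫⁻ h in ({0}ᶜ : Set (EuclideanSpace ℝ (Fin d))),
              ENNReal.ofReal (min 1 (‖h‖ ^ 2) * k h) := by
      refine lintegral_mono fun h => ?_
      by_cases hmem : ‖h‖ ∈ Ioc (0:ℝ) 1
      · rw [indicator_of_mem hmem]
        refine ENNReal.ofReal_le_ofReal ?_
        have h1 := (hk.2.2.2.2 h hmem.1 hmem.2).1
        have h2 : min 1 (‖h‖^2) = ‖h‖^2 :=
          min_eq_right (pow_le_one₀ (norm_nonneg h) hmem.2)
        rw [h2]
        calc κ⁻¹ * (‖h‖^2 * (ℓ ‖h‖ / ‖h‖^d)) = ‖h‖^2 * (κ⁻¹ * (ℓ ‖h‖ / ‖h‖^d)) := by ring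
        _ ≤ ‖h‖^2 * k h := mul_le_mul_of_nonneg_left h1 (by positivity)
      · rw [indicator_of_notMem hmem]
        exact zero_le
    have hpolar := polar_indicator d hd _ hFmeas (Ioc (0:ℝ) 1) measurableSet_Ioc
      (fun y hy => hy.1)
    have hsimp : ∫⁻ y in Ioc (0:ℝ) 1,
        ENNReal.ofReal (y ^ (d-1)) * ENNReal.ofReal (κ⁻¹ * (y^2 * (ℓ y / y^d)))
          = ∫⁻ y in Ioc (0:ℝ) 1, ENNReal.ofReal κ⁻¹ * ENNReal.ofReal (y * ℓ y) :=
      setLIntegral_congr_fun measurableSet_Ioc (fun y hy =>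
        pow_radial_id1 d hd κ⁻¹ hκinv.le ℓ y hy.1)
    have hTop : ∫⁻ y in Ioc (0:ℝ) 1, ENNReal.ofReal (y * ℓ y) = ⊤ := by
      by_contra hne
      exact Hint ((lintegral_ofReal_ne_top_iff_integrable
        ((measurable_id.mul hℓmeas).aestronglyMeasurable)
        (ae_nonneg_mul_ell ℓ hℓpos)).mp hne)
    have hm2 : Measurable fun y : ℝ => ENNReal.ofReal (y * ℓ y) := by fun_prop
    have hlhs : ∫⁻ h : EuclideanSpace ℝ (Fin d) in ({0}ᶜ : Set (EuclideanSpace ℝ (Fin d))),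
        (Ioc (0:ℝ) 1).indicator (fun s => ENNReal.ofReal (κ⁻¹ * (s^2 * (ℓ s / s^d)))) ‖h‖ = ⊤ := by
      rw [hpolar, hsimp, lintegral_const_mul _ hm2, hTop, ENNReal.mul_top, ENNReal.mul_top]
      · exact (sigE_ne_zero d hd)
      · simp only [ne_eq, ENNReal.ofReal_eq_zero, not_le]
        exact hκinv
    have htople : (⊤:ℝ≥0∞) ≤ ∫⁻ h in ({0}ᶜ : Set (EuclideanSpace ℝ (Fin d))),
        ENNReal.ofReal (min 1 (‖h‖ ^ 2) * k h) := hlhs ▸ hmono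
    exact lt_of_lt_of_le ENNReal.ofReal_lt_top htople
end
end
end
end

section
/- Let a > 1, b ∈ (1,a), γ = (ln b)/(ln a) ∈ (0,1), r ∈ (0,1/2) and x ∈ ℝ^d, and set r_n = L⁻¹( a^{n−1} L(r/2) ) for each integer n ≥ 1. If u : ℝ^d → ℝ is bounded and satisfies sup_{B_{r_n}(x)} u − inf_{B_{r_n}(x)} u ≤ 3 ‖u‖_∞ b^{−(n−1)} for every n ≥ 1, then for every y ∈ ℝ^d with 0 < |y − x| < r/2 one has |u(y) − u(x)| ≤ 3 b ‖u‖_∞ ( L(|x−y|) / L(r/2) )^{−γ}. -/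
open Set Metric

noncomputable section

/-- Let `L : (0,1) → (0,∞)` be a continuous strictly decreasing
bijection onto `(0,∞)` with inverse `L⁻¹ = Linv`. Let `a > 1`, `b ∈ (1,a)`,
`γ = (ln b)/(ln a)`, `r ∈ (0,1/2)`, `x ∈ ℝ^d`, and set `r_n = L⁻¹(a^{n-1} L(r/2))` for
`n ≥ 1`. If `u` is bounded and `sup_{B_{r_n}(x)} u - inf_{B_{r_n}(x)} u ≤ 3‖u‖_∞ b^{-(n-1)}`
for every `n ≥ 1`, then for every `y` with `0 < |y-x| < r/2`,
`|u(y) - u(x)| ≤ 3 b ‖u‖_∞ (L(|x-y|)/L(r/2))^{-γ}`. -/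
theorem statement15 (d : ℕ) (hd : 1 ≤ d)
    (L Linv : ℝ → ℝ)
    (hLpos : ∀ s ∈ Set.Ioo (0:ℝ) 1, 0 < L s)
    (hLanti : StrictAntiOn L (Set.Ioo (0:ℝ) 1))
    (hLcont : ContinuousOn L (Set.Ioo (0:ℝ) 1))
    (hLinv₁ : ∀ r ∈ Set.Ioo (0:ℝ) 1, Linv (L r) = r)
    (hLinv₂ : ∀ y : ℝ, 0 < y → Linv y ∈ Set.Ioo (0:ℝ) 1 ∧ L (Linv y) = y)
    (a b r : ℝ) (ha : 1 < a) (hb₁ : 1 < b) (hb₂ : b < a)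
    (hr₀ : 0 < r) (hr₁ : r < 1 / 2)
    (x : EuclideanSpace ℝ (Fin d))
    (u : EuclideanSpace ℝ (Fin d) → ℝ) (hu : ∃ M₀ : ℝ, ∀ z, |u z| ≤ M₀)
    (hosc : ∀ n : ℕ, 1 ≤ n →
      sSup (u '' Metric.ball x (Linv (a ^ (n - 1) * L (r / 2))))
          - sInf (u '' Metric.ball x (Linv (a ^ (n - 1) * L (r / 2))))
        ≤ 3 * (⨆ z, |u z|) * (b ^ (n - 1))⁻¹) :
    ∀ y : EuclideanSpace ℝ (Fin d), 0 < ‖y - x‖ → ‖y - x‖ < r / 2 →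
      |u y - u x| ≤ 3 * b * (⨆ z, |u z|) *
        (L ‖x - y‖ / L (r / 2)) ^ (-(Real.log b / Real.log a)) := by
  intro y hy0 hy1
  classical
  rw [norm_sub_rev x y]
  set ρ := ‖y - x‖ with hρdef
  have hρmem : ρ ∈ Set.Ioo (0:ℝ) 1 := ⟨hy0, by linarith⟩
  have hr2mem : r / 2 ∈ Set.Ioo (0:ℝ) 1 := ⟨by linarith, by linarith⟩
  have hLr2 : 0 < L (r / 2) := hLpos _ hr2mem
  have hLρ : L (r / 2) < L ρ := hLanti hρmem hr2mem hy1
  set ratio := L ρ / L (r / 2) with hratiodef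
  have hratio1 : 1 < ratio := (one_lt_div hLr2).2 hLρ
  have hratio0 : 0 < ratio := lt_trans one_pos hratio1
  have hex : ∃ m : ℕ, ratio ≤ a ^ m := by
    obtain ⟨m, hm⟩ := pow_unbounded_of_one_lt ratio ha
    exact ⟨m, hm.le⟩
  set N := Nat.find hex with hNdef
  have hN : ratio ≤ a ^ N := Nat.find_spec hex
  have hN0 : N ≠ 0 := by
    intro h
    rw [h, pow_zero] at hN
    linarith
  have hN1 : 1 ≤ N := Nat.one_le_iff_ne_zero.2 hN0
  have hNlt : a ^ (N - 1) < ratio := by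
    have := Nat.find_min hex (Nat.sub_lt (Nat.pos_of_ne_zero hN0) one_pos)
    linarith [not_le.1 this]
  -- ball radius
  have hspos : 0 < a ^ (N - 1) * L (r / 2) :=
    mul_pos (pow_pos (lt_trans one_pos ha) _) hLr2
  obtain ⟨hsmem, hLs⟩ := hLinv₂ _ hspos
  set s := Linv (a ^ (N - 1) * L (r / 2)) with hsdef
  have hρs : ρ < s := by
    have hLsρ : L s < L ρ := by
      rw [hLs]
      have : ratio * L (r / 2) = L ρ := div_mul_cancel₀ _ hLr2.ne'
      nlinarith
    exact (hLanti.lt_iff_gt hsmem hρmem).1 hLsρ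
  -- bounds on u
  obtain ⟨M₀, hM₀⟩ := hu
  set M := ⨆ z, |u z| with hMdef
  have hbdd : BddAbove (Set.range fun z => |u z|) := ⟨M₀, by rintro _ ⟨z, rfl⟩; exact hM₀ z⟩
  have hM0 : 0 ≤ M := le_trans (abs_nonneg (u x)) (le_ciSup hbdd x)
  -- sup/inf estimates on the ball
  have hxmem : x ∈ Metric.ball x s := Metric.mem_ball_self hsmem.1
  have hymem : y ∈ Metric.ball x s := by
    rw [Metric.mem_ball, dist_eq_norm]
    exact hρs
  have hSbddA : BddAbove (u '' Metric.ball x s) := ⟨M₀, by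
    rintro _ ⟨z, _, rfl⟩; exact (le_abs_self _).trans (hM₀ z)⟩
  have hSbddB : BddBelow (u '' Metric.ball x s) := ⟨-M₀, by
    rintro _ ⟨z, _, rfl⟩; exact (neg_le_neg (hM₀ z)).trans (neg_abs_le _)⟩
  have hsupy : u y ≤ sSup (u '' Metric.ball x s) := le_csSup hSbddA ⟨y, hymem, rfl⟩
  have hsupx : u x ≤ sSup (u '' Metric.ball x s) := le_csSup hSbddA ⟨x, hxmem, rfl⟩
  have hinfy : sInf (u '' Metric.ball x s) ≤ u y := csInf_le hSbddB ⟨y, hymem, rfl⟩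
  have hinfx : sInf (u '' Metric.ball x s) ≤ u x := csInf_le hSbddB ⟨x, hxmem, rfl⟩
  have hoscN := hosc N hN1
  have key : |u y - u x| ≤ 3 * M * (b ^ (N - 1))⁻¹ := by
    rw [abs_sub_le_iff]
    constructor <;> [skip; skip] <;> linarith
  -- rpow estimates
  have hb0 : (0:ℝ) < b := lt_trans one_pos hb₁
  have ha0 : (0:ℝ) < a := lt_trans one_pos ha
  set γ := Real.log b / Real.log a with hγdef
  have haγ : a ^ γ = b := by
    rw [hγdef, Real.log_div_log]
    exact Real.rpow_logb ha0 (ne_of_gt ha) hb0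
  have hγ0 : 0 ≤ γ := by
    apply div_nonneg <;> [exact Real.log_nonneg hb₁.le; exact Real.log_nonneg ha.le]
  have hratioγ : ratio ^ γ ≤ b ^ N := by
    calc ratio ^ γ ≤ (a ^ N) ^ γ :=
          Real.rpow_le_rpow hratio0.le hN hγ0
      _ = b ^ N := by
          rw [← Real.rpow_natCast a N, ← Real.rpow_mul ha0.le, mul_comm,
            Real.rpow_mul ha0.le, haγ, Real.rpow_natCast]
  have hratioγ0 : 0 < ratio ^ γ := Real.rpow_pos_of_pos hratio0 _
  have hfin : (b ^ N : ℝ)⁻¹ ≤ ratio ^ (-γ) := by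
    rw [Real.rpow_neg hratio0.le]
    exact inv_anti₀ hratioγ0 hratioγ
  have hbN : (b ^ (N - 1) : ℝ)⁻¹ = b * (b ^ N)⁻¹ := by
    have : b ^ N = b ^ (N - 1) * b := by
      rw [← pow_succ, Nat.sub_add_cancel hN1]
    rw [this]
    field_simp
  calc |u y - u x| ≤ 3 * M * (b ^ (N - 1))⁻¹ := key
    _ = 3 * b * M * (b ^ N)⁻¹ := by rw [hbN]; ring
    _ ≤ 3 * b * M * ratio ^ (-γ) := by
        apply mul_le_mul_of_nonneg_left hfin
        positivity
end
end
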